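/- There exist no quaternions a, b, c ∈ ℍ such that the one-sided quadratic polynomial p(x) = a·x² + b·x + c satisfies p(i) = 0, p(j) = 0, and p(k) = 1. (Interpolation by one-sided quaternion polynomials can fail even at pairwise distinct nodes.) -/

import Mathlib

open Quaternion

/-- The quaternion imaginary units `i`, `j`, `k`. -/
def qi : ℍ[ℝ] := ⟨0, 1, 0, 0⟩
def qj : ℍ[ℝ] := ⟨0, 0, 1, 0⟩
def qk : ℍ[ℝ] := ⟨0, 0, 0, 1⟩

/-- No one-sided quadratic quaternion polynomial `p(x) = a·x² + b·x + c` satisfies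
`p(i) = 0`, `p(j) = 0` and `p(k) = 1`. -/
theorem no_quadratic_interpolating_ijk :
    ¬ ∃ a b c : ℍ[ℝ],
      a * qi ^ 2 + b * qi + c = 0 ∧
      a * qj ^ 2 + b * qj + c = 0 ∧
      a * qk ^ 2 + b * qk + c = 1 := by
  rintro ⟨a,b,c,h1,h2,h3⟩
  obtain ⟨q1,q2,q3,q4,q5,q6,q7,q8,q9,q10,q11,q12⟩ :
      qi.re = 0 ∧ qi.imI = 1 ∧ qi.imJ = 0 ∧ qi.imK = 0 ∧
      qj.re = 0 ∧ qj.imI = 0 ∧ qj.imJ = 1 ∧ qj.imK = 0 ∧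
      qk.re = 0 ∧ qk.imI = 0 ∧ qk.imJ = 0 ∧ qk.imK = 1 :=
    ⟨rfl, rfl, rfl, rfl, rfl, rfl, rfl, rfl, rfl, rfl, rfl, rfl⟩
  simp only [q1, q2, q3, q4, q5, q6, q7, q8, q9, q10, q11, q12, pow_two, Quaternion.ext_iff, Quaternion.re_mul,
    Quaternion.imI_mul, Quaternion.imJ_mul, Quaternion.imK_mul,
    Quaternion.re_add, Quaternion.imI_add, Quaternion.imJ_add, Quaternion.imK_add,
    Quaternion.re_zero, Quaternion.imI_zero, Quaternion.imJ_zero, Quaternion.imK_zero,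
    Quaternion.re_one, Quaternion.imI_one, Quaternion.imJ_one, Quaternion.imK_one] at h1 h2 h3
  obtain ⟨e1,e2,e3,e4⟩ := h1
  obtain ⟨f1,f2,f3,f4⟩ := h2
  obtain ⟨g1,g2,g3,g4⟩ := h3
  ring_nf at e1 e2 e3 e4 f1 f2 f3 f4 g1 g2 g3 g4
  linarith
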